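/- If there exist polynomials w, p₁, q₁ ∈ ℝ[x] with w(a) = w(b), p̃ = p₁ ∘ w, and q̃ = q₁ ∘ w (where p̃, q̃ are antiderivatives of p, q vanishing at a), then for all nonnegative integers m, n: ∫_a^b p̃(x)^m q̃(x)^n p(x) dx = 0 and ∫_a^b p̃(x)^m q̃(x)^n q(x) dx = 0. -/

import Mathlib

open MeasureTheory

lemma eval_eq_of_integral_eq (p w p₁ : Polynomial ℝ) (a : ℝ)
    (hp : ∀ x : ℝ, (∫ σ in a..x, p.eval σ) = p₁.eval (w.eval x)) :
    ∀ x, p.eval x =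
      (Polynomial.derivative p₁).eval (w.eval x) * (Polynomial.derivative w).eval x := by
  intro x
  have h1 : p.eval x = deriv (fun u => ∫ σ in a..u, p.eval σ) x :=
    (Continuous.deriv_integral _ p.continuous a x).symm
  have h2 : deriv (fun u => p₁.eval (w.eval u)) x =
      (Polynomial.derivative p₁).eval (w.eval x) * (Polynomial.derivative w).eval x := by
    have := ((p₁.hasDerivAt (w.eval x)).comp x (w.hasDerivAt x)).deriv
    exact this
  rw [h1, funext hp, h2]

theorem composition_implies_moments_vanish
    (p q : Polynomial ℝ) (a b : ℝ) (hab : a < b)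
    (w p₁ q₁ : Polynomial ℝ)
    (hw : w.eval a = w.eval b)
    (hp : ∀ x : ℝ, (∫ σ in a..x, p.eval σ) = p₁.eval (w.eval x))
    (hq : ∀ x : ℝ, (∫ σ in a..x, q.eval σ) = q₁.eval (w.eval x)) :
    ∀ m n : ℕ,
      (∫ x in a..b, (∫ σ in a..x, p.eval σ)^m * (∫ σ in a..x, q.eval σ)^n * p.eval x) = 0 ∧
      (∫ x in a..b, (∫ σ in a..x, p.eval σ)^m * (∫ σ in a..x, q.eval σ)^n * q.eval x) = 0 := by
  have hp' := eval_eq_of_integral_eq p w p₁ a hp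
  have hq' := eval_eq_of_integral_eq q w q₁ a hq
  intro m n
  have key : ∀ r₁ : Polynomial ℝ,
      (∫ x in a..b, p₁.eval (w.eval x) ^ m * q₁.eval (w.eval x) ^ n *
        ((Polynomial.derivative r₁).eval (w.eval x) * (Polynomial.derivative w).eval x)) = 0 := by
    intro r₁
    set g : ℝ → ℝ := fun u =>
      p₁.eval u ^ m * q₁.eval u ^ n * (Polynomial.derivative r₁).eval u with hg
    have h1 : (∫ x in a..b, p₁.eval (w.eval x) ^ m * q₁.eval (w.eval x) ^ n *
        ((Polynomial.derivative r₁).eval (w.eval x) * (Polynomial.derivative w).eval x))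
        = ∫ x in a..b, (g ∘ w.eval) x * (Polynomial.derivative w).eval x := by
      congr 1; funext x; simp [hg, Function.comp]; ring
    rw [h1, intervalIntegral.integral_comp_mul_deriv (g := g)
        (fun x _ => w.hasDerivAt x)
        ((Polynomial.derivative w).continuous.continuousOn)
        (((p₁.continuous.pow m).mul (q₁.continuous.pow n)).mul (Polynomial.derivative r₁).continuous), hw, intervalIntegral.integral_same]
  constructor
  · have := key p₁
    rw [show (∫ x in a..b, (∫ σ in a..x, p.eval σ)^m * (∫ σ in a..x, q.eval σ)^n * p.eval x)
        = ∫ x in a..b, p₁.eval (w.eval x) ^ m * q₁.eval (w.eval x) ^ n *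
          ((Polynomial.derivative p₁).eval (w.eval x) * (Polynomial.derivative w).eval x) from by
        congr 1; funext x; rw [hp x, hq x, hp' x]]
    exact this
  · have := key q₁
    rw [show (∫ x in a..b, (∫ σ in a..x, p.eval σ)^m * (∫ σ in a..x, q.eval σ)^n * q.eval x)
        = ∫ x in a..b, p₁.eval (w.eval x) ^ m * q₁.eval (w.eval x) ^ n *
          ((Polynomial.derivative q₁).eval (w.eval x) * (Polynomial.derivative w).eval x) from by
        congr 1; funext x; rw [hp x, hq x, hq' x]]
    exact this
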